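/- arXiv:1103.3657 — 13 statements merged into one kernel-verified Lean document; each statement's English description precedes it below -/
import Mathlib

section
/- There exists a unique formal power series q in ℚ⟦X⟧ with zero constant coefficient satisfying the equation X·(2·(q')² + 3·q' + 2) = q'·(1 + q), where q' denotes the formal derivative of q. -/
open PowerSeries Finset

/-- coefficient `n` of the derivative, in terms of the coefficient function `f`. -/
noncomputable def dcoef (f : ℕ → ℚ) (k : ℕ) : ℚ := f (k + 1) * ((k : ℚ) + 1)

/-- The recursion functional: the functional equation at coefficient `n` reads
`f (n+1) * (n+1) = tfun f n`. -/
noncomputable def tfun (f : ℕ → ℚ) : ℕ → ℚ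
  | 0 => 0
  | (n + 1) =>
      2 * ∑ p ∈ antidiagonal n, dcoef f p.1 * dcoef f p.2
        + 3 * dcoef f n + (if n = 0 then 2 else 0)
        - ∑ p ∈ antidiagonal n, dcoef f p.1 * f (p.2 + 1)

lemma tfun_congr {f g : ℕ → ℚ} {n : ℕ} (h : ∀ k, k ≤ n → f k = g k) :
    tfun f n = tfun g n := by
  cases n with
  | zero => rfl
  | succ n =>
    have hd : ∀ k, k ≤ n → dcoef f k = dcoef g k := by
      intro k hk
      rw [dcoef, dcoef, h (k + 1) (by omega)]
    have s1 : ∑ p ∈ antidiagonal n, dcoef f p.1 * dcoef f p.2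
        = ∑ p ∈ antidiagonal n, dcoef g p.1 * dcoef g p.2 := by
      refine Finset.sum_congr rfl fun p hp => ?_
      have hp' := Finset.HasAntidiagonal.mem_antidiagonal.mp hp
      rw [hd p.1 (by omega), hd p.2 (by omega)]
    have s2 : ∑ p ∈ antidiagonal n, dcoef f p.1 * f (p.2 + 1)
        = ∑ p ∈ antidiagonal n, dcoef g p.1 * g (p.2 + 1) := by
      refine Finset.sum_congr rfl fun p hp => ?_
      have hp' := Finset.HasAntidiagonal.mem_antidiagonal.mp hp
      rw [hd p.1 (by omega), h (p.2 + 1) (by omega)]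
    simp only [tfun]
    rw [s1, s2, hd n le_rfl]

/-- Successive approximations to the coefficient sequence. -/
noncomputable def Aaux : ℕ → ℕ → ℚ
  | 0, _ => 0
  | (n + 1), k => if k = n + 1 then tfun (Aaux n) n / ((n : ℚ) + 1) else Aaux n k

/-- The coefficient sequence. -/
noncomputable def aseq (n : ℕ) : ℚ := Aaux n n

lemma Aaux_eq : ∀ n k, k ≤ n → Aaux n k = aseq k := by
  intro n
  induction n with
  | zero =>
    intro k hk
    have : k = 0 := Nat.le_zero.mp hk
    subst this; rfl
  | succ n ih =>
    intro k hk
    by_cases hkn : k = n + 1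
    · subst hkn; rfl
    · have : Aaux (n + 1) k = Aaux n k := by simp only [Aaux, if_neg hkn]
      rw [this, ih k (by omega)]

lemma aseq_zero : aseq 0 = 0 := rfl

lemma aseq_rec (n : ℕ) : aseq (n + 1) * ((n : ℚ) + 1) = tfun aseq n := by
  have h1 : aseq (n + 1) = tfun (Aaux n) n / ((n : ℚ) + 1) := by
    simp only [aseq, Aaux, if_pos rfl, if_true]
  have h2 : tfun (Aaux n) n = tfun aseq n := tfun_congr (fun k hk => Aaux_eq n k hk)
  have hne : ((n : ℚ) + 1) ≠ 0 := by positivity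
  rw [h1, h2, div_mul_cancel₀ _ hne]

lemma unique_c (c : ℕ → ℚ) (h0 : c 0 = 0)
    (h : ∀ n, c (n + 1) * ((n : ℚ) + 1) = tfun c n) : ∀ n, c n = aseq n := by
  intro n
  induction n using Nat.strong_induction_on with
  | _ n ih =>
    match n with
    | 0 => rw [h0]; rfl
    | (m + 1) =>
      have h2 : tfun c m = tfun aseq m := tfun_congr fun k hk => ih k (by omega)
      have hne : ((m : ℚ) + 1) ≠ 0 := by positivity
      exact mul_right_cancel₀ hne ((h m).trans (h2.trans (aseq_rec m).symm))

lemma coeff_derivativeFun' (f : PowerSeries ℚ) (n : ℕ) :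
    coeff n (derivativeFun f) = coeff (n + 1) f * (n + 1) :=
  coeff_derivative f n

lemma coeff_iff (q : PowerSeries ℚ) (h0 : constantCoeff q = 0) :
    (X * (2 * (derivativeFun q) ^ 2 + 3 * derivativeFun q + 2)
        = derivativeFun q * (1 + q))
    ↔ ∀ n, coeff (n + 1) q * ((n : ℚ) + 1) = tfun (fun k => coeff k q) n := by
  rw [PowerSeries.ext_iff]
  refine forall_congr' fun n => ?_
  cases n with
  | zero =>
    have hd : constantCoeff (derivativeFun q) = coeff 1 q := by
      rw [← coeff_zero_eq_constantCoeff, coeff_derivativeFun']; norm_num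
    rw [coeff_mul]
    simp only [tfun, Finset.Nat.antidiagonal_zero, Finset.sum_singleton, map_add, coeff_one,
      coeff_zero_eq_constantCoeff, h0, map_mul, constantCoeff_X, zero_mul, hd]
    norm_num
    exact eq_comm
  | succ n =>
    have e1 : coeff (n + 1) (X * (2 * (derivativeFun q) ^ 2 + 3 * derivativeFun q + 2))
        = 2 * ∑ p ∈ antidiagonal n,
              dcoef (fun k => coeff k q) p.1 * dcoef (fun k => coeff k q) p.2
          + 3 * dcoef (fun k => coeff k q) n + (if n = 0 then 2 else 0) := by
      rw [coeff_succ_X_mul]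
      have h2 : (2 : ℚ⟦X⟧) = C 2 := (map_ofNat (C) 2).symm
      have h3 : (3 : ℚ⟦X⟧) = C 3 := (map_ofNat (C) 3).symm
      rw [map_add, map_add, h2, h3, coeff_C_mul, coeff_C_mul, coeff_C, sq, coeff_mul]
      simp only [coeff_derivativeFun', dcoef]
    have e2 : coeff (n + 1) (derivativeFun q * (1 + q))
        = dcoef (fun k => coeff k q) (n + 1)
          + ∑ p ∈ antidiagonal n, dcoef (fun k => coeff k q) p.1 * (coeff (p.2 + 1) q) := by
      rw [coeff_mul, Finset.Nat.sum_antidiagonal_succ']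
      simp only [map_add, coeff_one, coeff_derivativeFun', dcoef]
      rw [coeff_zero_eq_constantCoeff, h0]
      push_cast
      ring_nf
    rw [e1, e2]
    simp only [tfun, dcoef]
    push_cast
    constructor <;> intro h <;> linarith

/-- There is a unique formal power series `q ∈ ℚ⟦X⟧` with zero constant coefficient
satisfying `X·(2·(q')² + 3·q' + 2) = q'·(1 + q)`. -/
theorem unique_simple_quadrangulation_series :
    ∃! q : PowerSeries ℚ, constantCoeff q = 0 ∧
      X * (2 * (derivativeFun q) ^ 2 + 3 * derivativeFun q + 2)
        = derivativeFun q * (1 + q) := by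
  have hmk0 : constantCoeff (PowerSeries.mk aseq) = 0 := by
    rw [← coeff_zero_eq_constantCoeff, coeff_mk]
    exact aseq_zero
  refine ⟨PowerSeries.mk aseq, ⟨hmk0, ?_⟩, ?_⟩
  · rw [coeff_iff _ hmk0]
    intro n
    simp only [coeff_mk]
    exact aseq_rec n
  · rintro q ⟨h0, heq⟩
    have h := (coeff_iff q h0).mp heq
    have hc : ∀ n, coeff n q = aseq n := by
      refine unique_c _ ?_ h
      rw [coeff_zero_eq_constantCoeff]; exact h0
    ext n
    rw [hc, coeff_mk]
end

section
/- Let α ∈ ℚ⟦X⟧ be the formal power series with constant coefficient 1 satisfying α = 1 + X·α³ (the generating series of rooted ternary trees). Then the series q := X·(α − 2)·(1 − α) satisfies X·(2·(q')² + 3·q' + 2) = q'·(1 + q), where q' denotes the formal derivative of q. -/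
open PowerSeries

/-- If `α ∈ ℚ⟦X⟧` has constant coefficient 1 and satisfies `α = 1 + X·α³`
(generating series of rooted ternary trees), then `q := X·(α − 2)·(1 − α)`
satisfies `X·(2·(q')² + 3·q' + 2) = q'·(1 + q)`. -/
theorem ternary_tree_series_satisfies_quadrangulation_equation
    (α : PowerSeries ℚ) (hα0 : constantCoeff α = 1)
    (hα : α = 1 + X * α ^ 3) :
    let q : PowerSeries ℚ := X * (α - 2) * (1 - α)
    X * (2 * (derivativeFun q) ^ 2 + 3 * derivativeFun q + 2)
      = derivativeFun q * (1 + q) := by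
  intro q
  set A : ℚ⟦X⟧ := d⁄dX ℚ α with hAdef
  have h2 : d⁄dX ℚ (2 : ℚ⟦X⟧) = 0 := by
    have : (2 : ℚ⟦X⟧) = (1:ℚ⟦X⟧) + 1 := by norm_num
    rw [this, map_add, Derivation.map_one_eq_zero, add_zero]
  -- compute q'
  have hq : derivativeFun q = (α-2)*(1-α) + X*(3-2*α)*A := by
    show d⁄dX ℚ (X*(α-2)*(1-α)) = (α-2)*(1-α) + X*(3-2*α)*A
    simp only [Derivation.leibniz, map_sub, Derivation.map_one_eq_zero, h2, derivative_X,
      smul_eq_mul, hAdef]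
    ring
  -- differentiate the defining equation
  have hA : A * (1 - 3*X*α^2) = α^3 := by
    have := congrArg (d⁄dX ℚ) hα
    rw [map_add, Derivation.map_one_eq_zero, Derivation.leibniz, derivative_X,
      Derivation.leibniz_pow, smul_eq_mul, smul_eq_mul, smul_eq_mul] at this
    rw [← hAdef] at this
    linear_combination this
  have hu : (1 - 3*X*α^2 : ℚ⟦X⟧) ≠ 0 := by
    intro h
    have := congrArg (constantCoeff) h
    simp [hα0] at this
  rw [hq]
  apply mul_right_cancel₀ (pow_ne_zero 2 hu)
  linear_combination
      (X*(X*(3-2*α))*(4*((α-2)*(1-α)*(1 - 3*X*α^2) + X*(3-2*α)*α^3)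
          + 3*(1 - 3*X*α^2)) + 2*X*(X*(3-2*α))^2*(A*(1 - 3*X*α^2) - α^3)
        - (X*(3-2*α))*(1+q)*(1 - 3*X*α^2)) * hA
    + (α^5*X^2 - 3*α^4*X^2 - 9*α^3*X^2 - 2*α^3*X + 5*α^2*X + 3*α*X + α - 2) * hα
end

section
/- Let α ∈ ℚ⟦X⟧ be the formal power series with constant coefficient 1 satisfying α = 1 + X·α³, and let q := X·(α − 2)·(1 − α). Then for every integer n ≥ 1, the coefficient of X^{n+1} in q equals 4·(3n)! / (n!·(2n+2)!). (This is Tutte's formula for the number of rooted simple quadrangulations with n inner faces.) -/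
open PowerSeries

private lemma fc (k : ℕ) : ((Nat.factorial (k + 1) : ℚ)) = ((k : ℚ) + 1) * (Nat.factorial k : ℚ) := by
  rw [Nat.factorial_succ]; push_cast; ring

/-- With `α = 1 + X·α³`, `α(0) = 1`, and `q := X·(α − 2)·(1 − α)`, the coefficient of
`X^{n+1}` in `q` is `4·(3n)! / (n!·(2n+2)!)` for every `n ≥ 1`
(Tutte's formula for rooted simple quadrangulations with `n` inner faces). -/
theorem coeff_simple_quadrangulation_series
    (α : PowerSeries ℚ) (hα0 : constantCoeff α = 1)
    (hα : α = 1 + X * α ^ 3) :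
    ∀ n : ℕ, 1 ≤ n →
      coeff (n + 1) (X * (α - 2) * (1 - α))
        = 4 * (Nat.factorial (3 * n) : ℚ)
            / ((Nat.factorial n : ℚ) * (Nat.factorial (2 * n + 2) : ℚ)) := by
  have hα' : ∀ k : ℕ, coeff k (d⁄dX ℚ α) = coeff (k + 1) α * (k + 1) :=
    fun k => coeff_derivative α k
  -- basic differential relation
  have E0 : d⁄dX ℚ α = α ^ 3 + 3 * X * α ^ 2 * d⁄dX ℚ α := by
    conv_lhs => rw [hα]
    rw [map_add, Derivation.leibniz, Derivation.leibniz_pow, derivative_X]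
    simp [smul_eq_mul]
    ring
  have h3 : X * α ^ 3 = α - 1 := by linear_combination -hα
  have hd2 : d⁄dX ℚ (α ^ 2) = 2 * α * d⁄dX ℚ α := by
    rw [pow_two, Derivation.leibniz]; simp [smul_eq_mul]; ring
  have hd3 : d⁄dX ℚ (α ^ 3) = 3 * α ^ 2 * d⁄dX ℚ α := by
    rw [pow_succ, Derivation.leibniz, hd2]; simp [smul_eq_mul]; ring
  -- key algebraic identities
  have K1 : X * (C 3 * d⁄dX ℚ α) - X * d⁄dX ℚ (α ^ 2) = α ^ 2 - α := by
    simp only [map_ofNat]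
    rw [hd2]
    linear_combination (X * α) * E0 + (α + 3 * X * d⁄dX ℚ α) * h3
  have K2 : C 6 * α - C 6 = X * (C 6 * α ^ 2)
      + X * (X * (C 9 * d⁄dX ℚ (α ^ 2))) - X * (X * (C 4 * d⁄dX ℚ (α ^ 3))) := by
    simp only [map_ofNat]
    rw [hd2, hd3]
    linear_combination (-6 * X * α) * ((X * α) * E0 + (α + 3 * X * d⁄dX ℚ α) * h3) - 6 * h3
  -- coefficient of α^3
  have hd : ∀ m : ℕ, coeff m (α ^ 3) = coeff (m + 1) α := by
    intro m
    have := congrArg (coeff (m + 1)) h3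
    rw [coeff_succ_X_mul, map_sub] at this
    rw [this, coeff_one, if_neg (Nat.succ_ne_zero m), sub_zero]
  -- c in terms of a
  have F1 : ∀ n : ℕ, ((n : ℚ) + 2) * coeff (n + 1) (α ^ 2)
      = (3 * n + 4) * coeff (n + 1) α := by
    intro n
    have := congrArg (coeff (n + 1)) K1
    simp only [map_sub, coeff_succ_X_mul, coeff_C_mul, coeff_derivative] at this
    linear_combination -this
  -- recurrence for a
  have F2 : ∀ n : ℕ, (4 * (n : ℚ) + 10) * coeff (n + 2) α
      = (9 * n + 15) * coeff (n + 1) (α ^ 2) := by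
    intro n
    have := congrArg (coeff (n + 2)) K2
    simp only [map_sub, map_add, coeff_succ_X_mul, coeff_C_mul, coeff_derivative,
      coeff_C, hd, if_neg (Nat.succ_ne_zero (n + 1))] at this
    linear_combination this
  -- initial values
  have ha0 : coeff 0 α = 1 := by
    simpa [coeff_zero_eq_constantCoeff] using hα0
  have ha1 : coeff 1 α = 1 := by
    have := congrArg (coeff 1) hα
    rw [map_add, coeff_succ_X_mul, coeff_one] at this
    rw [this, if_neg Nat.one_ne_zero, coeff_zero_eq_constantCoeff, map_pow, hα0]
    norm_num
  -- factorial nonzero facts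
  have hfac : ∀ m : ℕ, ((Nat.factorial m : ℚ)) ≠ 0 := fun m => by
    exact_mod_cast Nat.factorial_ne_zero m
  -- the closed formula for the coefficients of α
  have main : ∀ n : ℕ, coeff n α = (Nat.factorial (3 * n) : ℚ) /
      ((Nat.factorial n : ℚ) * (Nat.factorial (2 * n + 1) : ℚ)) := by
    intro n
    induction n with
    | zero => simpa [Nat.factorial] using ha0
    | succ n ih =>
      rcases Nat.eq_zero_or_pos n with h0 | hpos
      · subst h0; simpa [Nat.factorial] using ha1
      · obtain ⟨m, rfl⟩ := Nat.exists_eq_succ_of_ne_zero (Nat.pos_iff_ne_zero.mp hpos)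
        have f1 := F1 m
        have f2 := F2 m
        rw [ih] at f1
        have h10 : ((4 : ℚ) * m + 10) * ((m : ℚ) + 2) ≠ 0 := by positivity
        have hval : coeff (m + 1 + 1) α
            = (9 * (m : ℚ) + 15) * (3 * m + 4)
              * ((Nat.factorial (3 * (m + 1)) : ℚ) /
                ((Nat.factorial (m + 1) : ℚ) * (Nat.factorial (2 * (m + 1) + 1) : ℚ)))
              / ((4 * (m : ℚ) + 10) * ((m : ℚ) + 2)) := by
          rw [eq_div_iff h10]
          field_simp at f1 ⊢
          linear_combination ((9 * (m:ℚ) + 15)) * f1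
            + (((m:ℚ)+2) * (Nat.factorial (m+1) : ℚ) * (Nat.factorial (2*(m+1)+1) : ℚ)) * f2
        rw [hval]
        rw [show 3 * (m + 1 + 1) = 3 * (m + 1) + 1 + 1 + 1 by ring,
          show 2 * (m + 1 + 1) + 1 = 2 * (m + 1) + 1 + 1 + 1 by ring,
          fc (3 * (m + 1) + 1 + 1), fc (3 * (m + 1) + 1), fc (3 * (m + 1)),
          fc (2 * (m + 1) + 1 + 1), fc (2 * (m + 1) + 1), fc (m + 1)]
        have h2 : ((m : ℚ) + 1) ≠ 0 := by positivity
        field_simp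
        push_cast
        ring
  intro n hn
  obtain ⟨k, rfl⟩ := Nat.exists_eq_succ_of_ne_zero (by omega : n ≠ 0)
  have hsplit : X * (α - 2) * (1 - α) = X * (C 3 * α - α ^ 2 - C 2) := by
    simp only [map_ofNat]
    ring
  rw [hsplit, coeff_succ_X_mul, map_sub, map_sub, coeff_C_mul, coeff_C,
    if_neg (Nat.succ_ne_zero k)]
  have f1 := F1 k
  rw [main (k + 1)] at f1 ⊢
  have hcval : coeff (k + 1) (α ^ 2)
      = (3 * (k : ℚ) + 4) * ((Nat.factorial (3 * (k + 1)) : ℚ) /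
          ((Nat.factorial (k + 1) : ℚ) * (Nat.factorial (2 * (k + 1) + 1) : ℚ)))
        / ((k : ℚ) + 2) := by
    have h2 : ((k : ℚ) + 2) ≠ 0 := by positivity
    rw [eq_div_iff h2]
    linear_combination f1
  rw [hcval]
  rw [show 2 * (k + 1) + 2 = 2 * (k + 1) + 1 + 1 by ring, fc (2 * (k + 1) + 1)]
  have h2 : ((k : ℚ) + 2) ≠ 0 := by positivity
  field_simp
  push_cast
  ring
end

section
/- If q ∈ ℚ⟦X⟧ has zero constant coefficient and satisfies X·(2·(q')² + 3·q' + 2) = q'·(1 + q), then X·(q' + 2)³ = 4·q', where q' denotes the formal derivative of q. -/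
open PowerSeries

private lemma coeff_mul_single (f u : ℚ⟦X⟧) (n : ℕ) (h : ∀ j < n, coeff j u = 0) :
    coeff n (f * u) = constantCoeff f * coeff n u := by
  rw [coeff_mul, Finset.sum_eq_single (0, n)]
  · simp
  · intro b hb hbne
    have hb' := Finset.HasAntidiagonal.mem_antidiagonal.mp hb
    have h2 : b.2 < n := by
      rcases Nat.lt_or_ge b.2 n with h' | h'
      · exact h'
      · have e2 : b.2 = n := by omega
        have e1 : b.1 = 0 := by omega
        exact absurd (Prod.ext e1 e2) hbne
    rw [h _ h2, mul_zero]
  · intro h; exact absurd (Finset.HasAntidiagonal.mem_antidiagonal.mpr (by simp)) h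

/-- If `q ∈ ℚ⟦X⟧` has zero constant coefficient and satisfies
`X·(2·(q')² + 3·q' + 2) = q'·(1 + q)`, then `X·(q' + 2)³ = 4·q'`. -/
theorem quadrangulation_equation_implies_cubic
    (q : PowerSeries ℚ) (hq0 : constantCoeff q = 0)
    (hq : X * (2 * (derivativeFun q) ^ 2 + 3 * derivativeFun q + 2)
        = derivativeFun q * (1 + q)) :
    X * (derivativeFun q + 2) ^ 3 = 4 * derivativeFun q := by
  set p := derivativeFun q with hp
  set r := (d⁄dX ℚ) p with hr
  have d2 : (d⁄dX ℚ) (2 : ℚ⟦X⟧) = 0 := by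
    rw [show (2:ℚ⟦X⟧) = ((2:ℕ):ℚ⟦X⟧) by norm_num]; exact Derivation.map_natCast _ 2
  have d3 : (d⁄dX ℚ) (3 : ℚ⟦X⟧) = 0 := by
    rw [show (3:ℚ⟦X⟧) = ((3:ℕ):ℚ⟦X⟧) by norm_num]; exact Derivation.map_natCast _ 3
  have d4 : (d⁄dX ℚ) (4 : ℚ⟦X⟧) = 0 := by
    rw [show (4:ℚ⟦X⟧) = ((4:ℕ):ℚ⟦X⟧) by norm_num]; exact Derivation.map_natCast _ 4
  -- constant coefficient of p is 0
  have hp0 : constantCoeff p = 0 := by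
    have h := congrArg (constantCoeff) hq
    simp [hq0] at h
    simpa using h.symm
  -- coefficient 1 of p is 2
  have hp1 : coeff 1 p = 2 := by
    have h := congrArg (coeff 1) hq
    rw [show (coeff 1) (X * (2 * p ^ 2 + 3 * p + 2)) = coeff 0 (2 * p ^ 2 + 3 * p + 2)
      from coeff_succ_X_mul 0 _] at h
    simp [coeff_mul, Finset.Nat.antidiagonal_succ, coeff_zero_eq_constantCoeff, hp0, hq0] at h
    simpa [map_ofNat] using h.symm
  -- differentiate the functional equation
  have hD : (2 * p ^ 2 + 3 * p + 2) + X * ((4 * p + 3) * r)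
      = r * (1 + q) + p * p := by
    have h := congrArg (d⁄dX ℚ) hq
    simp only [Derivation.leibniz, Derivation.leibniz_pow, derivative_X, map_add, d2, d3,
      smul_eq_mul, nsmul_eq_mul, ← hp, ← hr, Derivation.map_one_eq_zero] at h
    rw [show (d⁄dX ℚ) q = p from rfl] at h
    push_cast at h
    linear_combination h
  -- cancel the unit (p+1)
  have hp1ne : (p + 1 : ℚ⟦X⟧) ≠ 0 := by
    intro hcon
    have := congrArg (constantCoeff) hcon
    simp [hp0] at this
  have hcancel : (p + 1) * (p * (p + 2) - 2 * X * r * (1 - p)) = 0 := by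
    linear_combination p * hD - r * hq
  have hstar : p * (p + 2) = 2 * X * r * (1 - p) := by
    rcases mul_eq_zero.mp hcancel with h | h
    · exact absurd h hp1ne
    · linear_combination h
  -- the key ODE for u
  set u : ℚ⟦X⟧ := X * (p + 2) ^ 3 - 4 * p with hu
  have hDu : (d⁄dX ℚ) u = (p + 2) ^ 3 + 3 * X * (p + 2) ^ 2 * r - 4 * r := by
    rw [hu]
    simp only [map_sub, Derivation.leibniz, Derivation.leibniz_pow, map_add, derivative_X,
      d2, d4, smul_eq_mul, nsmul_eq_mul, ← hr]
    push_cast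
    ring
  have hkey : (2 + p) * u = 2 * X * (1 - p) * ((d⁄dX ℚ) u) := by
    rw [hDu, hu]
    linear_combination (3 * X * (p + 2) ^ 2 - 4) * hstar
  -- u has vanishing coefficients
  have hu0 : coeff 0 u = 0 := by
    rw [hu]
    simp [coeff_zero_eq_constantCoeff, hp0]
  have hu1 : coeff 1 u = 0 := by
    rw [hu]
    rw [map_sub, show (coeff 1) (X * (p + 2) ^ 3) = coeff 0 ((p + 2) ^ 3)
      from coeff_succ_X_mul 0 _]
    rw [show (4:ℚ⟦X⟧) = C 4 from (map_ofNat (C) 4).symm, coeff_C_mul]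
    simp [coeff_zero_eq_constantCoeff, hp0, hp1, map_ofNat]
    norm_num
  have key : ∀ n, coeff n u = 0 := by
    intro n
    induction n using Nat.strong_induction_on with
    | _ n ih =>
      match n with
      | 0 => exact hu0
      | 1 => exact hu1
      | (k+2) =>
        have ihd : ∀ j < k + 1, coeff j ((d⁄dX ℚ) u) = 0 := by
          intro j hj
          rw [coeff_derivative, ih (j+1) (by omega), zero_mul]
        have hL : coeff (k+2) ((2 + p) * u) = 2 * coeff (k+2) u := by
          rw [coeff_mul_single _ _ _ (fun j hj => ih j hj)]
          have hc : constantCoeff (2 + p) = 2 := by simp [hp0, map_ofNat]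
          rw [hc]
        have hR : coeff (k+2) (2 * X * (1 - p) * ((d⁄dX ℚ) u))
            = 2 * (coeff (k+2) u * (k+2)) := by
          rw [show (2 : ℚ⟦X⟧) * X * (1 - p) * ((d⁄dX ℚ) u)
            = X * ((2 * (1 - p)) * ((d⁄dX ℚ) u)) by ring]
          rw [show (coeff (k+2)) (X * ((2 * (1 - p)) * ((d⁄dX ℚ) u)))
            = coeff (k+1) ((2 * (1 - p)) * ((d⁄dX ℚ) u)) from coeff_succ_X_mul (k+1) _]
          rw [coeff_mul_single _ _ _ ihd, coeff_derivative]
          have hc : constantCoeff (2 * (1 - p)) = 2 := by simp [hp0, map_ofNat]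
          rw [hc]
          push_cast
          ring
        have heq : 2 * coeff (k+2) u = 2 * (coeff (k+2) u * (k+2)) := by
          rw [← hL, ← hR, hkey]
        have hkne : (2 : ℚ) * (k + 2) - 2 ≠ 0 := by
          have : (0:ℚ) ≤ (k:ℚ) := Nat.cast_nonneg k
          intro hcon; nlinarith
        have : coeff (k+2) u * ((2 : ℚ) * (k + 2) - 2) = 0 := by
          push_cast at heq ⊢
          linear_combination -heq
        rcases mul_eq_zero.mp this with h | h
        · exact h
        · exact absurd h hkne
  have huz : u = 0 := by
    ext n
    simp [key n]
  rw [hu] at huz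
  linear_combination huz
end

section
/- If q ∈ ℚ⟦X⟧ has zero constant coefficient and satisfies X·(2·(q')² + 3·q' + 2) = q'·(1 + q), then 4·q = 2·X·q' − X·(q')², where q' denotes the formal derivative of q. -/
open PowerSeries

private lemma ps_dmul (f g : ℚ⟦X⟧) :
    derivativeFun (f * g) = f * derivativeFun g + g * derivativeFun f := by
  rw [derivativeFun_mul, smul_eq_mul, smul_eq_mul]

private lemma ps_dsub (f g : ℚ⟦X⟧) :
    derivativeFun (f - g) = derivativeFun f - derivativeFun g :=
  (d⁄dX ℚ).map_sub f g

private lemma ps_dX : derivativeFun (X : ℚ⟦X⟧) = 1 := derivative_X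

private lemma ps_d2 : derivativeFun (2 : ℚ⟦X⟧) = 0 := by
  rw [show (2:ℚ⟦X⟧) = C 2 from (map_ofNat _ _).symm]; exact derivative_C

private lemma ps_d3 : derivativeFun (3 : ℚ⟦X⟧) = 0 := by
  rw [show (3:ℚ⟦X⟧) = C 3 from (map_ofNat _ _).symm]; exact derivative_C

private lemma ps_d4 : derivativeFun (4 : ℚ⟦X⟧) = 0 := by
  rw [show (4:ℚ⟦X⟧) = C 4 from (map_ofNat _ _).symm]; exact derivative_C

private lemma ps_coeff_two_mul (f : ℚ⟦X⟧) (j : ℕ) :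
    coeff j (2 * f) = 2 * coeff j f := by
  rw [show (2:ℚ⟦X⟧) = C 2 from (map_ofNat _ _).symm, ← smul_eq_C_mul, map_smul,
    smul_eq_mul]

/-- If `q ∈ ℚ⟦X⟧` has zero constant coefficient and satisfies
`X·(2·(q')² + 3·q' + 2) = q'·(1 + q)`, then `4·q = 2·X·q' − X·(q')²`. -/
theorem quadrangulation_equation_implies_q_expression
    (q : PowerSeries ℚ) (hq0 : constantCoeff q = 0)
    (hq : X * (2 * (derivativeFun q) ^ 2 + 3 * derivativeFun q + 2)
        = derivativeFun q * (1 + q)) :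
    4 * q = 2 * X * derivativeFun q - X * (derivativeFun q) ^ 2 := by
  set p := derivativeFun q with hp
  set dp := derivativeFun p with hdp
  -- constant coefficient of p is 0
  have hp0 : constantCoeff p = 0 := by
    have h := congrArg (constantCoeff) hq
    simp [hq0] at h
    linarith [h]
  -- coefficient 1 of p is 2
  have hp1 : coeff 1 p = 2 := by
    have h := congrArg (coeff 1) hq
    rw [mul_comm X _, coeff_succ_mul_X] at h
    simp [coeff_mul, Finset.Nat.sum_antidiagonal_eq_sum_range_succ_mk, Finset.sum_range_succ,
      coeff_zero_eq_constantCoeff, hp0, hq0, pow_two, map_ofNat] at h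
    linarith [h]
  -- derivative of the functional equation
  have hD := congrArg derivativeFun hq
  rw [pow_two] at hD
  simp only [ps_dmul, derivativeFun_add, ps_dX, ps_d2, ps_d3, derivativeFun_one, mul_zero,
    zero_mul, add_zero, zero_add, mul_one, ← hp, ← hdp] at hD
  -- from hD and hq: p(p+1)(p+2) = 2 X dp (1-p^2), then cancel (1+p)
  have R1 : p^3 + 3*p^2 + 2*p = 2*X*dp*(1-p^2) := by
    linear_combination p * hD - dp * hq
  have h1p : (1 + p : ℚ⟦X⟧) ≠ 0 := by
    intro h
    have := congrArg (constantCoeff) h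
    simp [hp0] at this
  have R2 : p * (p + 2) = 2*X*dp*(1-p) := by
    have hfac : (1 + p) * (p * (p + 2) - 2*X*dp*(1-p)) = 0 := by
      linear_combination R1
    rcases mul_eq_zero.mp hfac with h | h
    · exact absurd h h1p
    · exact sub_eq_zero.mp h
  -- define G and compute its derivative
  set G : ℚ⟦X⟧ := X * ((p+2)*(p+2)*(p+2)) - 4*p with hGdef
  set dG := derivativeFun G with hdGdef
  have hdG : dG = (p+2)*(p+2)*(p+2) + 3*X*((p+2)*(p+2))*dp - 4*dp := by
    rw [hdGdef, hGdef]
    simp only [ps_dsub, ps_dmul, derivativeFun_add, ps_dX, ps_d2, ps_d4, derivativeFun_one,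
      mul_zero, zero_mul, add_zero, zero_add, mul_one, ← hdp]
    ring
  -- the ODE satisfied by G
  have hODE : 2*(X*dG) - 2*G = p * (2*(X*dG) + G) := by
    rw [hGdef, hdG]
    linear_combination (4 - 3*X*((p+2)*(p+2))) * R2
  -- coefficient facts
  have hXd : ∀ j : ℕ, coeff j (X * dG) = (j : ℚ) * coeff j G := by
    intro j
    cases j with
    | zero => simp [coeff_zero_eq_constantCoeff]
    | succ m =>
      rw [mul_comm, coeff_succ_mul_X, hdGdef, show coeff m G.derivativeFun = coeff (m+1) G * (m+1) from coeff_derivative G m]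
      push_cast
      ring
  -- G = 0 by strong induction on coefficients
  have hG : G = 0 := by
    ext n
    rw [map_zero]
    induction n using Nat.strong_induction_on with
    | _ n ih =>
      match n, ih with
      | 0, _ =>
        rw [hGdef]
        simp [coeff_zero_eq_constantCoeff, hp0]
      | 1, _ =>
        rw [hGdef, map_sub, mul_comm X _, coeff_succ_mul_X]
        rw [show (4:ℚ⟦X⟧)*p = 2*(2*p) by ring, ps_coeff_two_mul, ps_coeff_two_mul, hp1]
        simp [coeff_zero_eq_constantCoeff, hp0, map_ofNat]
        norm_num
      | (k+2), ih =>
        have hc := congrArg (coeff (k+2)) hODE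
        rw [map_sub, ps_coeff_two_mul, ps_coeff_two_mul, hXd] at hc
        have hrhs : coeff (k+2) (p * (2*(X*dG) + G)) = 0 := by
          rw [coeff_mul]
          apply Finset.sum_eq_zero
          rintro ⟨i, j⟩ hmem
          rw [Finset.HasAntidiagonal.mem_antidiagonal] at hmem
          rcases Nat.eq_zero_or_pos i with hi | hi
          · subst hi
            simp [coeff_zero_eq_constantCoeff, hp0]
          · have hj : j < k + 2 := by omega
            have hGj : coeff j G = 0 := ih j hj
            rw [map_add, ps_coeff_two_mul, hXd, hGj]
            simp
        rw [hrhs] at hc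
        have h2 : (2*((k:ℚ)+2) - 2) ≠ 0 := by
          have : (0:ℚ) ≤ (k:ℚ) := Nat.cast_nonneg k
          intro h; nlinarith
        have hg : (2*((k:ℚ)+2) - 2) * coeff (k+2) G = 0 := by
          push_cast at hc ⊢
          linear_combination hc
        exact (mul_eq_zero.mp hg).resolve_left h2
  -- conclude
  have hfin : p * (4*q - (2*X*p - X*p^2)) = G := by
    rw [hGdef]
    linear_combination (-4 : ℚ⟦X⟧) * hq
  rw [hG] at hfin
  have hpne : p ≠ 0 := by
    intro h
    rw [h] at hp1
    simp at hp1
  rcases mul_eq_zero.mp hfin with h | h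
  · exact absurd h hpne
  · linear_combination h
end

section
/- There exists a unique formal power series t in ℚ⟦X⟧ with zero constant coefficient satisfying the equation 3·X·(t')² + 1 = (t + 1)·t', where t' denotes the formal derivative of t. -/
open PowerSeries Finset

/-- Coefficient sequence of the unique solution, defined by strong recursion. -/
noncomputable def triA : ℕ → ℚ
  | 0 => 0
  | n + 1 =>
      ((if n = 0 then (1:ℚ) else 0)
        + 3 * ∑ i ∈ (Finset.range n).attach,
            ((i.1:ℚ)+1) * triA (i.1+1) * (((n-i.1 : ℕ) : ℚ) * triA (n-i.1))
        - ∑ i ∈ (Finset.range n).attach,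
            triA (i.1+1) * (((n-i.1 : ℕ) : ℚ) * triA (n-i.1))) / ((n:ℚ)+1)
  decreasing_by
    all_goals (have := Finset.mem_range.mp i.2; omega)

noncomputable def triS1 (c : ℕ → ℚ) (n : ℕ) : ℚ :=
  ∑ i ∈ Finset.range n, c (i+1) * (((n-i : ℕ) : ℚ) * c (n-i))

noncomputable def triS2 (c : ℕ → ℚ) (n : ℕ) : ℚ :=
  ∑ i ∈ Finset.range n, ((i:ℚ)+1) * c (i+1) * (((n-i : ℕ) : ℚ) * c (n-i))

lemma triA_succ (n : ℕ) :
    triA (n+1) = ((if n = 0 then (1:ℚ) else 0) + 3 * triS2 triA n - triS1 triA n) / ((n:ℚ)+1) := by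
  rw [triA, triS1, triS2]
  rw [Finset.sum_attach (Finset.range n)
        (fun i => ((i:ℚ)+1) * triA (i+1) * (((n-i : ℕ) : ℚ) * triA (n-i))),
      Finset.sum_attach (Finset.range n)
        (fun i => triA (i+1) * (((n-i : ℕ) : ℚ) * triA (n-i)))]

lemma triA_spec (n : ℕ) :
    ((n:ℚ)+1) * triA (n+1)
      = (if n = 0 then (1:ℚ) else 0) + 3 * triS2 triA n - triS1 triA n := by
  rw [triA_succ]
  have h : ((n:ℚ)+1) ≠ 0 := by positivity
  field_simp

lemma coeff_derivativeFun_q (f : PowerSeries ℚ) (n : ℕ) :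
    coeff n (derivativeFun f) = coeff (n+1) f * (n+1) :=
  coeff_derivative f n

/-- Coefficientwise reformulation of the functional equation. -/
lemma key (t : PowerSeries ℚ) (h0 : constantCoeff t = 0) (n : ℕ) :
    (coeff n (3 * X * (derivativeFun t) ^ 2 + 1)
      = coeff n ((t + 1) * derivativeFun t)) ↔
    ((n:ℚ)+1) * coeff (n+1) t
      = (if n = 0 then (1:ℚ) else 0)
        + 3 * triS2 (fun k => coeff k t) n - triS1 (fun k => coeff k t) n := by
  have hrhs : coeff n ((t + 1) * derivativeFun t)
      = triS1 (fun k => coeff k t) n + ((n:ℚ)+1) * coeff (n+1) t := by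
    rw [add_mul, one_mul, map_add, coeff_derivativeFun_q]
    congr 1
    · rw [coeff_mul, Finset.Nat.sum_antidiagonal_eq_sum_range_succ_mk, Finset.sum_range_succ']
      have h00 : coeff 0 t = 0 := by rw [coeff_zero_eq_constantCoeff]; exact h0
      simp only [triS1, coeff_derivativeFun_q, Nat.sub_zero, h00, zero_mul, add_zero]
      apply Finset.sum_congr rfl
      intro i hi
      have hi' : i < n := Finset.mem_range.mp hi
      have h1 : n - (i+1) + 1 = n - i := by omega
      have h2 : ((n - (i+1) : ℕ) : ℚ) + 1 = ((n - i : ℕ) : ℚ) := by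
        exact_mod_cast congrArg (Nat.cast : ℕ → ℚ) h1
      rw [h1, h2]
      ring
    · ring
  have hlhs : coeff n (3 * X * (derivativeFun t) ^ 2 + 1)
      = (if n = 0 then (1:ℚ) else 0) + 3 * triS2 (fun k => coeff k t) n := by
    have h3 : (3 : PowerSeries ℚ) * X * (derivativeFun t) ^ 2
        = X * (C 3 * (derivativeFun t) ^ 2) := by
      rw [(map_ofNat (C (R := ℚ)) 3 : (C 3 : PowerSeries ℚ) = 3)]; ring
    rw [map_add, coeff_one, h3]
    cases n with
    | zero =>
        simp [triS2]
    | succ m =>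
        rw [coeff_succ_X_mul, coeff_C_mul, sq, coeff_mul,
          Finset.Nat.sum_antidiagonal_eq_sum_range_succ_mk]
        simp only [triS2, Nat.succ_ne_zero, if_false, zero_add, add_zero]
        congr 1
        apply Finset.sum_congr rfl
        intro i hi
        have hi' : i < m + 1 := Finset.mem_range.mp hi
        have h1 : m + 1 - i = (m - i) + 1 := by omega
        rw [coeff_derivativeFun_q, coeff_derivativeFun_q, h1]
        push_cast
        ring
  rw [hlhs, hrhs]
  constructor <;> intro h <;> linarith

lemma key' (t : PowerSeries ℚ) (h0 : constantCoeff t = 0) :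
    (3 * X * (derivativeFun t) ^ 2 + 1 = (t + 1) * derivativeFun t) ↔
    ∀ n : ℕ, ((n:ℚ)+1) * coeff (n+1) t
      = (if n = 0 then (1:ℚ) else 0)
        + 3 * triS2 (fun k => coeff k t) n - triS1 (fun k => coeff k t) n := by
  rw [PowerSeries.ext_iff]
  exact forall_congr' fun n => key t h0 n

/-- There is a unique formal power series `t ∈ ℚ⟦X⟧` with zero constant coefficient
satisfying `3·X·(t')² + 1 = (t + 1)·t'`. -/
theorem unique_simple_triangulation_series :
    ∃! t : PowerSeries ℚ, constantCoeff t = 0 ∧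
      3 * X * (derivativeFun t) ^ 2 + 1 = (t + 1) * derivativeFun t := by
  have hmk : (fun k => coeff k (PowerSeries.mk triA)) = triA := by
    funext k; exact coeff_mk k triA
  refine ⟨PowerSeries.mk triA, ⟨?_, ?_⟩, ?_⟩
  · rw [← coeff_zero_eq_constantCoeff, coeff_mk, triA]
  · have h0 : constantCoeff (PowerSeries.mk triA) = 0 := by
      rw [← coeff_zero_eq_constantCoeff, coeff_mk, triA]
    rw [key' _ h0]
    intro n
    rw [coeff_mk, hmk]
    exact triA_spec n
  · rintro t ⟨h0, heq⟩
    have hco := (key' t h0).mp heq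
    have hall : ∀ n, coeff n t = triA n := by
      intro n
      induction n using Nat.strong_induction_on with
      | _ n ih =>
        match n with
        | 0 => rw [coeff_zero_eq_constantCoeff] at *; rw [h0, triA]
        | m + 1 =>
          have hm := hco m
          have hS1 : triS1 (fun k => coeff k t) m = triS1 triA m := by
            simp only [triS1]
            apply Finset.sum_congr rfl
            intro i hi
            have hi' : i < m := Finset.mem_range.mp hi
            simp only [ih (i+1) (by omega), ih (m-i) (by omega)]
          have hS2 : triS2 (fun k => coeff k t) m = triS2 triA m := by
            simp only [triS2]
            apply Finset.sum_congr rfl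
            intro i hi
            have hi' : i < m := Finset.mem_range.mp hi
            simp only [ih (i+1) (by omega), ih (m-i) (by omega)]
          have hm' := triA_spec m
          rw [hS1, hS2] at hm
          have hne : ((m:ℚ)+1) ≠ 0 := by positivity
          have heq2 : ((m:ℚ)+1) * coeff (m+1) t = ((m:ℚ)+1) * triA (m+1) := by
            rw [hm, hm']
          exact mul_left_cancel₀ hne heq2
    ext n
    rw [coeff_mk, hall n]
end

section
/- Let α ∈ ℚ⟦X⟧ be the formal power series with constant coefficient 1 satisfying α = 1 + X·α⁴ (the generating series of rooted quaternary trees); α is a unit in ℚ⟦X⟧. Then the series t := (α − 2)·(1 − α)·α^{−2} satisfies 3·X·(t')² + 1 = (t + 1)·t', where t' denotes the formal derivative of t. -/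
open PowerSeries

/-- If `α ∈ ℚ⟦X⟧` has constant coefficient 1 and satisfies `α = 1 + X·α⁴`
(generating series of rooted quaternary trees), then `α` is a unit in `ℚ⟦X⟧`,
and the series `t := (α − 2)·(1 − α)·α⁻²` satisfies
`3·X·(t')² + 1 = (t + 1)·t'`. -/
theorem quaternary_tree_series_satisfies_triangulation_equation
    (α : PowerSeries ℚ) (hα0 : constantCoeff α = 1)
    (hα : α = 1 + X * α ^ 4) :
    IsUnit α ∧
      (let t : PowerSeries ℚ := (α - 2) * (1 - α) * (α⁻¹) ^ 2
       3 * X * (derivativeFun t) ^ 2 + 1 = (t + 1) * derivativeFun t) := by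
  have hc : constantCoeff α ≠ 0 := by rw [hα0]; norm_num
  have hβ : α * α⁻¹ = 1 := PowerSeries.mul_inv_cancel α hc
  have hu : IsUnit α := IsUnit.of_mul_eq_one _ hβ
  have hne : α ≠ 0 := fun h => hc (by rw [h]; simp)
  refine ⟨hu, ?_⟩
  -- basic relation
  have hX : X * α ^ 4 = α - 1 := by linear_combination -hα
  -- derivative of the defining equation
  have hda : derivativeFun α = derivativeFun (1 + X * α ^ 4) := by rw [← hα]
  have hpow : derivativeFun (α ^ 4) = 4 * α ^ 3 * derivativeFun α := by
    have h4 : α ^ 4 = α * (α * (α * α)) := by ring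
    rw [h4]
    simp only [derivativeFun_mul, smul_eq_mul]
    ring
  rw [derivativeFun_add, derivativeFun_one, derivativeFun_mul, hpow] at hda
  have hXd : derivativeFun (X : ℚ⟦X⟧) = 1 := derivative_X (R := ℚ)
  simp only [smul_eq_mul, hXd] at hda
  have hd : derivativeFun α * (4 - 3 * α) = α ^ 5 := by
    have h1 : derivativeFun α * (1 - 4 * (X * α ^ 3)) = α ^ 4 := by
      linear_combination hda
    have h2 : derivativeFun α * (α - 4 * (X * α ^ 4)) = α ^ 5 := by
      linear_combination α * h1
    linear_combination h2 + 4 * derivativeFun α * hX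
  -- derivative of the inverse
  have hb' : derivativeFun (α⁻¹) = -(α⁻¹) ^ 2 * derivativeFun α := by
    have h0 : derivativeFun (α * α⁻¹) = 0 := by rw [hβ, derivativeFun_one]
    rw [derivativeFun_mul] at h0
    simp only [smul_eq_mul] at h0
    linear_combination α⁻¹ * h0 - (derivativeFun (α⁻¹)) * hβ
  intro t
  have ht : derivativeFun t = derivativeFun ((α - 2) * (1 - α)) * (α⁻¹) ^ 2
      + (α - 2) * (1 - α) * (2 * α⁻¹ * derivativeFun (α⁻¹)) := by
    have hsq : derivativeFun ((α⁻¹) ^ 2) = 2 * α⁻¹ * derivativeFun (α⁻¹) := by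
      rw [sq, derivativeFun_mul]; simp only [smul_eq_mul]; ring
    show derivativeFun ((α - 2) * (1 - α) * (α⁻¹) ^ 2) = _
    rw [derivativeFun_mul, hsq]
    simp only [smul_eq_mul]
    ring
  have hfac : derivativeFun ((α - 2) * (1 - α)) = (3 - 2 * α) * derivativeFun α := by
    have h2 : derivativeFun (2 : PowerSeries ℚ) = 0 := by
      have h2' : (2 : PowerSeries ℚ) = 1 + 1 := by norm_num
      rw [h2', derivativeFun_add, derivativeFun_one, add_zero]
    have h1 : derivativeFun (1 : PowerSeries ℚ) = 0 := derivativeFun_one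
    rw [derivativeFun_mul]
    simp only [smul_eq_mul]
    have hs1 : derivativeFun (α - 2) = derivativeFun α := by
      have e : α - 2 + 2 = α := by ring
      have := congrArg derivativeFun e
      rw [derivativeFun_add, h2, add_zero] at this
      exact this
    have hs2 : derivativeFun (1 - α) = -derivativeFun α := by
      have e : 1 - α + α = 1 := by ring
      have := congrArg derivativeFun e
      rw [derivativeFun_add, h1] at this
      linear_combination this
    rw [hs1, hs2]; ring
  rw [hfac, hb'] at ht
  have ht2 : derivativeFun t * α ^ 3 = α ^ 2 * α ^ 3 := by
    rw [ht]
    have e1 : α ^ 2 * α ^ 3 = α ^ 5 := by ring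
    rw [e1, ← hd]
    linear_combination (((3 - 2*α) * derivativeFun α * α * (α * α⁻¹ + 1))
      - 2 * (α - 2) * (1 - α) * derivativeFun α * ((α * α⁻¹)^2 + α * α⁻¹ + 1)) * hβ
  have hα3 : α ^ 3 ≠ 0 := pow_ne_zero _ hne
  have ht' : derivativeFun t = α ^ 2 := mul_right_cancel₀ hα3 ht2
  have htα : t * α ^ 2 = (α - 2) * (1 - α) := by
    show (α - 2) * (1 - α) * (α⁻¹) ^ 2 * α ^ 2 = _
    calc (α - 2) * (1 - α) * (α⁻¹) ^ 2 * α ^ 2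
        = (α - 2) * (1 - α) * (α * α⁻¹) ^ 2 := by ring
      _ = (α - 2) * (1 - α) := by rw [hβ]; ring
  show 3 * X * (derivativeFun t) ^ 2 + 1 = (t + 1) * derivativeFun t
  rw [ht']
  have h3 : 3 * X * (α ^ 2) ^ 2 = 3 * (α - 1) := by linear_combination 3 * hX
  linear_combination h3 + htα + 2*(α-1)*(α-2)*(α*α⁻¹+1)*hβ
end

section
/- Let α ∈ ℚ⟦X⟧ be the formal power series with constant coefficient 1 satisfying α = 1 + X·α⁴, and let t := (α − 2)·(1 − α)·α^{−2}. Then for every integer n ≥ 1, the coefficient of X^n in t equals 2·(4n−3)! / (n!·(3n−1)!). (This is Tutte's formula for the number of rooted simple triangulations with 2n faces.) -/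
open PowerSeries

noncomputable section
local notation "D" => PowerSeries.derivative ℚ

lemma Dmul (f g : PowerSeries ℚ) : D (f * g) = f * D g + g * D f := by
  rw [Derivation.leibniz]; simp [smul_eq_mul]

lemma Dpow4 (f : PowerSeries ℚ) : D (f ^ 4) = 4 * f ^ 3 * D f := by
  rw [Derivation.leibniz_pow]; simp [smul_eq_mul]; ring

lemma Dconst (q : ℚ) : D ((C q : PowerSeries ℚ)) = 0 := derivative_C (r := q)

lemma coeff_theta (f : PowerSeries ℚ) (n : ℕ) :
    coeff n (X * D f) = n * coeff n f := by
  cases n with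
  | zero => simp [coeff_zero_eq_constantCoeff, map_mul, constantCoeff_X]
  | succ n => rw [coeff_succ_X_mul, coeff_derivative]; push_cast; ring

lemma jets (α : PowerSeries ℚ) (hα : α = 1 + X * α ^ 4) :
    (4 - 3*α) * D α = α^5 ∧
    (4 - 3*α) * D (D α) = 3*(D α)^2 + 5*α^4*(D α) ∧
    (4 - 3*α) * D (D (D α)) = 9*(D α)*(D (D α)) + 20*α^3*(D α)^2 + 5*α^4*(D (D α)) := by
  have h4 : D (4 : PowerSeries ℚ) = 0 := by
    rw [show ((4:PowerSeries ℚ)) = ((4:ℕ):PowerSeries ℚ) by norm_num]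
    exact Derivation.map_natCast _ 4
  have h3' : D (3 : PowerSeries ℚ) = 0 := by
    rw [show ((3:PowerSeries ℚ)) = ((3:ℕ):PowerSeries ℚ) by norm_num]
    exact Derivation.map_natCast _ 3
  have hd1 : D α = α^4 + 4*X*α^3*(D α) := by
    conv_lhs => rw [hα]
    rw [map_add, Derivation.map_one_eq_zero, Dmul X (α^4), Dpow4, derivative_X]
    ring
  have h1 : (4 - 3*α) * D α = α^5 := by
    linear_combination α * hd1 - 4 * (D α) * hα
  have hd2 := congrArg D h1
  rw [Dmul, map_sub, h4, Dmul 3 α, h3', Derivation.leibniz_pow] at hd2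
  have h2 : (4 - 3*α) * D (D α) = 3*(D α)^2 + 5*α^4*(D α) := by
    simp only [smul_eq_mul] at hd2
    push_cast at hd2
    linear_combination hd2
  have h5 : D (5 : PowerSeries ℚ) = 0 := by
    rw [show ((5:PowerSeries ℚ)) = ((5:ℕ):PowerSeries ℚ) by norm_num]
    exact Derivation.map_natCast _ 5
  have hd3 := congrArg D h2
  rw [Dmul, map_sub, h4, Dmul 3 α, h3', map_add, Dmul, Dmul (5*α^4) (D α),
    Dmul 5 (α^4), h5, Dpow4, Derivation.leibniz_pow, h3'] at hd3
  have h3 : (4 - 3*α) * D (D (D α)) =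
      9*(D α)*(D (D α)) + 20*α^3*(D α)^2 + 5*α^4*(D (D α)) := by
    simp only [smul_eq_mul] at hd3
    push_cast at hd3
    linear_combination hd3
  exact ⟨h1, h2, h3⟩

lemma ode (α : PowerSeries ℚ) (hα0 : constantCoeff α = 1) (hα : α = 1 + X * α ^ 4) :
    27*(X*D (X*D (X*D (α^2)))) + 27*(X*D (X*D (α^2))) + 6*(X*D (α^2))
      = 8*(X*(32*(X*D (X*D (X*D (α^2)))) + 80*(X*D (X*D (α^2))) + 62*(X*D (α^2)) + 15*α^2)) := by
  obtain ⟨h1, h2, h3⟩ := jets α hα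
  have hD2 : D (2 : PowerSeries ℚ) = 0 := by
    rw [show ((2:PowerSeries ℚ)) = ((2:ℕ):PowerSeries ℚ) by norm_num]
    exact Derivation.map_natCast _ 2
  have hDX2 : D (X^2 : PowerSeries ℚ) = 2*X := by
    rw [pow_two, Dmul, derivative_X]; ring
  have hb1 : D (α^2) = 2*α*D α := by rw [pow_two, Dmul]; ring
  have c2 : X*D (X*D (α^2)) = X*D (α^2) + X^2*D (D (α^2)) := by
    rw [Dmul X (D (α^2)), derivative_X]; ring
  have c3 : X*D (X*D (X*D (α^2)))
      = X*D (α^2) + 3*(X^2*D (D (α^2))) + X^3*D (D (D (α^2))) := by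
    rw [c2, map_add, Dmul X (D (α^2)), Dmul (X^2) (D (D (α^2))), derivative_X, hDX2]; ring
  have hb2 : D (D (α^2)) = 2*(D α*D α) + 2*(α*D (D α)) := by
    rw [hb1, Dmul (2*α) (D α), Dmul 2 α, hD2]; ring
  have hb3 : D (D (D (α^2))) = 6*(D α*D (D α)) + 2*(α*D (D (D α))) := by
    rw [hb2, map_add, Dmul 2 (D α*D α), Dmul (D α) (D α), Dmul 2 (α*D (D α)),
      Dmul α (D (D α)), hD2]; ring
  have hu : (4 - 3*α : PowerSeries ℚ)^5 ≠ 0 := by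
    apply pow_ne_zero
    intro h
    have := congrArg (constantCoeff) h
    simp [map_ofNat, hα0] at this
    norm_num at this
  apply mul_left_cancel₀ hu
  rw [c3, c2, hb3, hb2, hb1]
  linear_combination ((13824:PowerSeries ℚ)*X^3*α + (-41472:PowerSeries ℚ)*X^3*α^2 + (46656:PowerSeries ℚ)*X^3*α^3 + (-23328:PowerSeries ℚ)*X^3*α^4 + (4374:PowerSeries ℚ)*X^3*α^5 + (-131072:PowerSeries ℚ)*X^4*α + (393216:PowerSeries ℚ)*X^4*α^2 + (-442368:PowerSeries ℚ)*X^4*α^3 + (221184:PowerSeries ℚ)*X^4*α^4 + (-41472:PowerSeries ℚ)*X^4*α^5) * h3 +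
    ((55296:PowerSeries ℚ)*X^2*α + (-165888:PowerSeries ℚ)*X^2*α^2 + (186624:PowerSeries ℚ)*X^2*α^3 + (-93312:PowerSeries ℚ)*X^2*α^4 + (17496:PowerSeries ℚ)*X^2*α^5 + (41472:PowerSeries ℚ)*X^3*(D α) + (-720896:PowerSeries ℚ)*X^3*α + (-93312:PowerSeries ℚ)*X^3*α*(D α) + (2162688:PowerSeries ℚ)*X^3*α^2 + (69984:PowerSeries ℚ)*X^3*α^2*(D α) + (-2433024:PowerSeries ℚ)*X^3*α^3 + (-17496:PowerSeries ℚ)*X^3*α^3*(D α) + (1216512:PowerSeries ℚ)*X^3*α^4 + (-210816:PowerSeries ℚ)*X^3*α^5 + (-38880:PowerSeries ℚ)*X^3*α^6 + (29160:PowerSeries ℚ)*X^3*α^7 + (-7290:PowerSeries ℚ)*X^3*α^8 + (-393216:PowerSeries ℚ)*X^4*(D α) + (884736:PowerSeries ℚ)*X^4*α*(D α) + (-663552:PowerSeries ℚ)*X^4*α^2*(D α) + (165888:PowerSeries ℚ)*X^4*α^3*(D α) + (-163840:PowerSeries ℚ)*X^4*α^5 + (368640:PowerSeries ℚ)*X^4*α^6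 + (-276480:PowerSeries ℚ)*X^4*α^7 + (69120:PowerSeries ℚ)*X^4*α^8) * h2 +
    ((30720:PowerSeries ℚ)*X*α + (-92160:PowerSeries ℚ)*X*α^2 + (103680:PowerSeries ℚ)*X*α^3 + (-51840:PowerSeries ℚ)*X*α^4 + (9720:PowerSeries ℚ)*X*α^5 + (55296:PowerSeries ℚ)*X^2*(D α) + (-712704:PowerSeries ℚ)*X^2*α + (-124416:PowerSeries ℚ)*X^2*α*(D α) + (2138112:PowerSeries ℚ)*X^2*α^2 + (93312:PowerSeries ℚ)*X^2*α^2*(D α) + (-2405376:PowerSeries ℚ)*X^2*α^3 + (-23328:PowerSeries ℚ)*X^2*α^3*(D α) + (1202688:PowerSeries ℚ)*X^2*α^4 + (-142560:PowerSeries ℚ)*X^2*α^5 + (-176256:PowerSeries ℚ)*X^2*α^6 + (124416:PowerSeries ℚ)*X^2*α^7 + (-29160:PowerSeries ℚ)*X^2*α^8 + (-720896:PowerSeries ℚ)*X^3*(D α) + (31104:PowerSeries ℚ)*X^3*(D α)^2 + (1622016:PowerSeries ℚ)*X^3*α*(D α) + (-46656:PowerSeries ℚ)*X^3*α*(D α)^2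 + (-1216512:PowerSeries ℚ)*X^3*α^2*(D α) + (17496:PowerSeries ℚ)*X^3*α^2*(D α)^2 + (304128:PowerSeries ℚ)*X^3*α^3*(D α) + (120960:PowerSeries ℚ)*X^3*α^4*(D α) + (-1081344:PowerSeries ℚ)*X^3*α^5 + (-212544:PowerSeries ℚ)*X^3*α^5*(D α) + (2297856:PowerSeries ℚ)*X^3*α^6 + (120528:PowerSeries ℚ)*X^3*α^6*(D α) + (-1622016:PowerSeries ℚ)*X^3*α^7 + (-21870:PowerSeries ℚ)*X^3*α^7*(D α) + (380160:PowerSeries ℚ)*X^3*α^8 + (51840:PowerSeries ℚ)*X^3*α^9 + (-62856:PowerSeries ℚ)*X^3*α^10 + (19440:PowerSeries ℚ)*X^3*α^11 + (-294912:PowerSeries ℚ)*X^4*(D α)^2 + (442368:PowerSeries ℚ)*X^4*α*(D α)^2 + (-165888:PowerSeries ℚ)*X^4*α^2*(D α)^2 + (-1146880:PowerSeries ℚ)*X^4*α^4*(D α) + (2015232:PowerSeries ℚ)*X^4*α^5*(D α) + (-1142784:PowerSeries ℚ)*X^4*α^6*(D α) + (207360:PowerSeries ℚ)*X^4*α^7*(D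 α) + (-491520:PowerSeries ℚ)*X^4*α^9 + (595968:PowerSeries ℚ)*X^4*α^10 + (-184320:PowerSeries ℚ)*X^4*α^11) * h1 +
    ((122880:PowerSeries ℚ)*X*α^2 + (-337920:PowerSeries ℚ)*X*α^3 + (353280:PowerSeries ℚ)*X*α^4 + (-165120:PowerSeries ℚ)*X*α^5 + (-1440:PowerSeries ℚ)*X*α^6 + (61560:PowerSeries ℚ)*X*α^7 + (-42120:PowerSeries ℚ)*X*α^8 + (9720:PowerSeries ℚ)*X*α^9 + (589824:PowerSeries ℚ)*X^2*α^6 + (-1210368:PowerSeries ℚ)*X^2*α^7 + (841728:PowerSeries ℚ)*X^2*α^8 + (-195840:PowerSeries ℚ)*X^2*α^9 + (-51840:PowerSeries ℚ)*X^2*α^10 + (62856:PowerSeries ℚ)*X^2*α^11 + (-19440:PowerSeries ℚ)*X^2*α^12 + (491520:PowerSeries ℚ)*X^3*α^10 + (-595968:PowerSeries ℚ)*X^3*α^11 + (184320:PowerSeries ℚ)*X^3*α^12) * hα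

lemma rec1 (α : PowerSeries ℚ) (hα0 : constantCoeff α = 1) (hα : α = 1 + X * α ^ 4)
    (n : ℕ) :
    (27*((n:ℚ)+1)^3 + 27*((n:ℚ)+1)^2 + 6*((n:ℚ)+1)) * coeff (n+1) (α^2)
      = 8*(32*(n:ℚ)^3 + 80*(n:ℚ)^2 + 62*(n:ℚ) + 15) * coeff n (α^2) := by
  have h := congrArg (coeff (n+1)) (ode α hα0 hα)
  simp only [show (27:PowerSeries ℚ) = C 27 from (map_ofNat (C) 27).symm,
    show (6:PowerSeries ℚ) = C 6 from (map_ofNat (C) 6).symm,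
    show (8:PowerSeries ℚ) = C 8 from (map_ofNat (C) 8).symm,
    show (32:PowerSeries ℚ) = C 32 from (map_ofNat (C) 32).symm,
    show (80:PowerSeries ℚ) = C 80 from (map_ofNat (C) 80).symm,
    show (62:PowerSeries ℚ) = C 62 from (map_ofNat (C) 62).symm,
    show (15:PowerSeries ℚ) = C 15 from (map_ofNat (C) 15).symm,
    map_add, coeff_C_mul, coeff_theta, coeff_succ_X_mul, coeff_derivative] at h
  linear_combination h

lemma bform (α : PowerSeries ℚ) (hα0 : constantCoeff α = 1) (hα : α = 1 + X * α ^ 4) :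
    ∀ m : ℕ, coeff m (α^2)
      = 2*((4*m+1).factorial:ℚ)/((m.factorial:ℚ)*((3*m+2).factorial:ℚ)) := by
  intro m
  induction m with
  | zero =>
    simp [coeff_zero_eq_constantCoeff, map_pow, hα0]
  | succ m IH =>
    have hrec := rec1 α hα0 hα m
    rw [IH] at hrec
    have hc1 : (27*((m:ℚ)+1)^3 + 27*((m:ℚ)+1)^2 + 6*((m:ℚ)+1)) ≠ 0 := by positivity
    apply mul_left_cancel₀ hc1
    rw [hrec]
    rw [show 4*(m+1)+1 = (4*m+4)+1 by omega, Nat.factorial_succ ((4*m+4)),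
      show 4*m+4 = (4*m+3)+1 by omega, Nat.factorial_succ ((4*m+3)),
      show 4*m+3 = (4*m+2)+1 by omega, Nat.factorial_succ ((4*m+2)),
      show 4*m+2 = (4*m+1)+1 by omega, Nat.factorial_succ ((4*m+1)),
      show 3*(m+1)+2 = (3*m+4)+1 by omega, Nat.factorial_succ ((3*m+4)),
      show 3*m+4 = (3*m+3)+1 by omega, Nat.factorial_succ ((3*m+3)),
      show 3*m+3 = (3*m+2)+1 by omega, Nat.factorial_succ ((3*m+2)),
      Nat.factorial_succ m]
    have hm : (m.factorial:ℚ) ≠ 0 := Nat.cast_ne_zero.mpr m.factorial_ne_zero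
    have h4 : ((4*m+1).factorial:ℚ) ≠ 0 := Nat.cast_ne_zero.mpr (4*m+1).factorial_ne_zero
    have h3 : ((3*m+2).factorial:ℚ) ≠ 0 := Nat.cast_ne_zero.mpr (3*m+2).factorial_ne_zero
    have hm1 : ((m:ℚ)+1) ≠ 0 := by positivity
    push_cast
    field_simp
    ring

/-- With `α = 1 + X·α⁴`, `α(0) = 1`, and `t := (α − 2)·(1 − α)·α⁻²`, the coefficient
of `X^n` in `t` equals `2·(4n−3)! / (n!·(3n−1)!)` for every `n ≥ 1`
(Tutte's formula for rooted simple triangulations with `2n` faces). -/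
theorem coeff_simple_triangulation_series
    (α : PowerSeries ℚ) (hα0 : constantCoeff α = 1)
    (hα : α = 1 + X * α ^ 4) :
    ∀ n : ℕ, 1 ≤ n →
      coeff n ((α - 2) * (1 - α) * (α⁻¹) ^ 2)
        = 2 * (Nat.factorial (4 * n - 3) : ℚ)
            / ((Nat.factorial n : ℚ) * (Nat.factorial (3 * n - 1) : ℚ)) := by
  intro n hn
  obtain ⟨m, rfl⟩ : ∃ m, n = 1 + m := ⟨n - 1, by omega⟩
  have hD2 : D (2 : PowerSeries ℚ) = 0 := by
    rw [show ((2:PowerSeries ℚ)) = ((2:ℕ):PowerSeries ℚ) by norm_num]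
    exact Derivation.map_natCast _ 2
  have hinv : α⁻¹ * α = 1 := PowerSeries.inv_mul_cancel α (by rw [hα0]; exact one_ne_zero)
  have h1 : (4 - 3*α) * D α = α^5 := (jets α hα).1
  have hα3 : (α^3 : PowerSeries ℚ) ≠ 0 := by
    apply pow_ne_zero
    intro h
    rw [h] at hα0
    simp at hα0
  have key : α^3 * D ((α-2)*(1-α)*(α⁻¹)^2) = α^3 * α^2 := by
    rw [Dmul ((α-2)*(1-α)) ((α⁻¹)^2), Dmul (α-2) (1-α), pow_two (α⁻¹), Dmul α⁻¹ α⁻¹,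
      derivative_inv', map_sub, map_sub, Derivation.map_one_eq_zero, hD2]
    linear_combination (D α*(3-2*α)*α*(1+α⁻¹*α)
      - 2*(D α)*(α-2)*(1-α)*(1+α⁻¹*α+(α⁻¹*α)^2)) * hinv + h1
  have hDt : D ((α-2)*(1-α)*(α⁻¹)^2) = α^2 := mul_left_cancel₀ hα3 key
  have hcd : coeff m (D ((α-2)*(1-α)*(α⁻¹)^2))
      = coeff (m+1) ((α-2)*(1-α)*(α⁻¹)^2) * (m+1) := coeff_derivative _ m
  rw [hDt, bform α hα0 hα m] at hcd
  rw [show 1+m = m+1 from Nat.add_comm 1 m,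
      show 4*(m+1)-3 = 4*m+1 by omega, show 3*(m+1)-1 = 3*m+2 by omega,
      Nat.factorial_succ m]
  have hm : (m.factorial:ℚ) ≠ 0 := Nat.cast_ne_zero.mpr m.factorial_ne_zero
  have h3f : ((3*m+2).factorial:ℚ) ≠ 0 := Nat.cast_ne_zero.mpr (3*m+2).factorial_ne_zero
  have hm1 : ((m:ℚ)+1) ≠ 0 := by positivity
  push_cast at hcd ⊢
  field_simp at hcd ⊢
  linear_combination (-1 : ℚ) * hcd
end
end

section
/- Let α ∈ ℚ⟦X⟧ be the formal power series with constant coefficient 1 satisfying α = 1 + X·α⁴, and let t := (α − 2)·(1 − α)·α^{−2}. Then the formal derivative of t equals α². -/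
open PowerSeries

/-- With `α = 1 + X·α⁴`, `α(0) = 1`, and `t := (α − 2)·(1 − α)·α⁻²`, the formal
derivative of `t` equals `α²`. -/
theorem derivative_simple_triangulation_series
    (α : PowerSeries ℚ) (hα0 : constantCoeff α = 1)
    (hα : α = 1 + X * α ^ 4) :
    derivativeFun ((α - 2) * (1 - α) * (α⁻¹) ^ 2) = α ^ 2 := by
  have hc : constantCoeff α ≠ 0 := by rw [hα0]; norm_num
  have hi : α * α⁻¹ = 1 := PowerSeries.mul_inv_cancel α hc
  have hX1 : X * α ^ 4 = α - 1 := by nth_rewrite 2 [hα]; ring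
  have hD : d⁄dX ℚ α = α ^ 4 + X * (4 * α ^ 3 * d⁄dX ℚ α) := by
    conv_lhs => rw [hα]
    simp [Derivation.leibniz, Derivation.leibniz_pow, smul_eq_mul]
    ring
  set d := d⁄dX ℚ α with hd
  have hd4 : d * (4 - 3 * α) = α ^ 5 := by
    linear_combination α * hD + 4 * d * hX1
  have hα3 : (α : PowerSeries ℚ) ^ 3 ≠ 0 := by
    apply pow_ne_zero
    intro h
    rw [h] at hc
    simp at hc
  have key : α ^ 3 * derivativeFun ((α - 2) * (1 - α) * (α⁻¹) ^ 2) = α ^ 3 * α ^ 2 := by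
    show α ^ 3 * d⁄dX ℚ ((α - 2) * (1 - α) * (α⁻¹) ^ 2) = α ^ 3 * α ^ 2
    simp only [Derivation.leibniz, Derivation.leibniz_pow, derivative_inv', smul_eq_mul,
      map_sub, map_one, map_add, map_ofNat, derivative_C, ← hd]
    have h2 : d⁄dX ℚ (2 : PowerSeries ℚ) = 0 := by
      rw [show (2 : PowerSeries ℚ) = C (R := ℚ) 2 from (map_ofNat (C (R := ℚ)) 2).symm, derivative_C]
    have h1 : d⁄dX ℚ (1 : PowerSeries ℚ) = 0 := Derivation.map_one_eq_zero _
    rw [h2, h1]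
    linear_combination hd4 + d * ((2 * α ^ 2 - 6 * α + 4) * (α * α⁻¹) ^ 2
      + (4 - 3 * α) * (α * α⁻¹) + (4 - 3 * α)) * hi
  exact mul_left_cancel₀ hα3 key
end

section
/- If t ∈ ℚ⟦X⟧ has zero constant coefficient and satisfies 3·X·(t')² + 1 = (t + 1)·t', then (X·(t')² + 1)² = t', where t' denotes the formal derivative of t. -/
open PowerSeries

private lemma aux_vanish (a b d : PowerSeries ℚ) (h0 : constantCoeff d = 0)
    (h : derivativeFun d = a * d + X * (b * derivativeFun d)) : d = 0 := by
  ext n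
  rw [map_zero]
  induction n using Nat.strong_induction_on with
  | _ n ih =>
    match n with
    | 0 => simpa [coeff_zero_eq_constantCoeff] using h0
    | n + 1 =>
      have h1 : coeff n (a * d) = 0 := by
        rw [coeff_mul]
        apply Finset.sum_eq_zero
        intro p hp
        rw [ih p.2 (Nat.lt_succ_of_le (Finset.HasAntidiagonal.antidiagonal.snd_le hp)), mul_zero]
      have h2 : coeff n (X * (b * derivativeFun d)) = 0 := by
        cases n with
        | zero => simp [coeff_zero_eq_constantCoeff]
        | succ m =>
          rw [coeff_succ_X_mul, coeff_mul]
          apply Finset.sum_eq_zero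
          intro p hp
          erw [coeff_derivativeFun,
            ih (p.2 + 1) (by have := Finset.HasAntidiagonal.antidiagonal.snd_le hp; omega), zero_mul, mul_zero]
      have hc := congrArg (coeff n) h
      erw [coeff_derivativeFun, map_add, h1, h2, add_zero] at hc
      have hne : ((n : ℚ) + 1) ≠ 0 := by positivity
      rcases mul_eq_zero.mp hc with h | h
      · exact h
      · exact absurd h hne

/-- If `t ∈ ℚ⟦X⟧` has zero constant coefficient and satisfies
`3·X·(t')² + 1 = (t + 1)·t'`, then `(X·(t')² + 1)² = t'`. -/
theorem triangulation_equation_implies_quartic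
    (t : PowerSeries ℚ) (ht0 : constantCoeff t = 0)
    (ht : 3 * X * (derivativeFun t) ^ 2 + 1 = (t + 1) * derivativeFun t) :
    (X * (derivativeFun t) ^ 2 + 1) ^ 2 = derivativeFun t := by
  set u := derivativeFun t with hu
  have hu0 : constantCoeff u = 1 := by
    have h := congrArg (constantCoeff) ht
    simp [ht0] at h
    linarith
  have hdX : derivativeFun (X : ℚ⟦X⟧) = 1 := derivative_X
  have hd3 : derivativeFun (3 : ℚ⟦X⟧) = 0 := by
    rw [← map_ofNat (C (R := ℚ)) 3]; exact derivativeFun_C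
  have hdsub : ∀ f g : ℚ⟦X⟧, derivativeFun (f - g) = derivativeFun f - derivativeFun g := by
    intro f g
    have h := derivativeFun_add (f - g) g
    rw [sub_add_cancel] at h
    rw [h]; ring
  have hd := congrArg derivativeFun ht
  simp only [pow_two, derivativeFun_add, derivativeFun_mul, derivativeFun_one, hdX, hd3,
    smul_eq_mul, ← hu] at hd
  have hu_ne : u ≠ 0 := by
    intro h; rw [h, map_zero] at hu0; exact one_ne_zero hu0.symm
  have key : derivativeFun u * (1 - 3 * X * u ^ 2) = 2 * u ^ 3 := by
    apply mul_right_cancel₀ hu_ne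
    linear_combination (u * derivativeFun u) * ht - u ^ 2 * hd
  have hdd : derivativeFun ((X * u ^ 2 + 1) ^ 2 - u)
      = 2 * (X * u ^ 2 + 1) * (u ^ 2 + 2 * X * u * derivativeFun u) - derivativeFun u := by
    rw [hdsub]
    simp only [pow_two, derivativeFun_add, derivativeFun_mul, derivativeFun_one, hdX,
      smul_eq_mul]
    ring
  have h0d : constantCoeff ((X * u ^ 2 + 1) ^ 2 - u) = 0 := by
    simp [hu0]
  have hkey : derivativeFun ((X * u ^ 2 + 1) ^ 2 - u)
      = (2 * u ^ 2) * ((X * u ^ 2 + 1) ^ 2 - u)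
        + X * ((3 * u ^ 2) * derivativeFun ((X * u ^ 2 + 1) ^ 2 - u)) := by
    rw [hdd]
    linear_combination (4 * X * u * (1 + X * u ^ 2) - 1) * key
  have := aux_vanish (2 * u ^ 2) (3 * u ^ 2) _ h0d hkey
  linear_combination this
end

section
/- If t ∈ ℚ⟦X⟧ has zero constant coefficient and satisfies 3·X·(t')² + 1 = (t + 1)·t', then t''·(3·X·(t')² − 1) + 2·(t')³ = 0, where t' and t'' denote the first and second formal derivatives of t. -/
open PowerSeries

private lemma derivFun_X : derivativeFun (X : PowerSeries ℚ) = 1 :=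
  PowerSeries.derivative_X

/-- If `t ∈ ℚ⟦X⟧` has zero constant coefficient and satisfies
`3·X·(t')² + 1 = (t + 1)·t'`, then `t''·(3·X·(t')² − 1) + 2·(t')³ = 0`. -/
theorem triangulation_equation_derived
    (t : PowerSeries ℚ) (ht0 : constantCoeff t = 0)
    (ht : 3 * X * (derivativeFun t) ^ 2 + 1 = (t + 1) * derivativeFun t) :
    derivativeFun (derivativeFun t) * (3 * X * (derivativeFun t) ^ 2 - 1)
      + 2 * (derivativeFun t) ^ 3 = 0 := by
  have h3 : derivativeFun (3 : PowerSeries ℚ) = 0 := by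
    rw [← map_ofNat (C (R := ℚ)) 3]; exact derivativeFun_C
  have h1 := congrArg derivativeFun ht
  simp only [derivativeFun_add, derivativeFun_mul, derivativeFun_one, derivFun_X,
    pow_two, smul_eq_mul, h3] at h1
  linear_combination derivativeFun t * h1 - derivativeFun (derivativeFun t) * ht
end

section
/- Let P ∈ ℚ⟦X⟧ be the formal power series with constant coefficient 1 satisfying P = 1 + 3·X·P², and let y := X·(P·(4 − P)/3)² ∈ ℚ⟦X⟧, a series with zero constant coefficient. Let Q ∈ ℚ⟦T⟧ be the formal power series with constant coefficient 1 satisfying Q = 1 + T·Q³. Then y = ((P−1)/3)·((4−P)/3)², and the substitution of y into Q equals 3·(4 − P)^{−1} in ℚ⟦X⟧ (the series 4 − P has constant coefficient 3 and hence is invertible). -/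
open PowerSeries

lemma coeff_pow_eq_zero' {f : PowerSeries ℚ} (hf : constantCoeff f = 0)
    {n e : ℕ} (h : n < e) : coeff n (f ^ e) = 0 := by
  have hd : (X : PowerSeries ℚ) ^ e ∣ f ^ e :=
    pow_dvd_pow_of_dvd (X_dvd_iff.mpr hf) e
  exact (X_pow_dvd_iff.mp hd) n h

lemma coeff_aeval_eq_zero {f : PowerSeries ℚ} (hf : constantCoeff f = 0)
    {p : Polynomial ℚ} {n : ℕ} (h : ∀ k ≤ n, p.coeff k = 0) :
    coeff n (Polynomial.aeval f p) = 0 := by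
  rw [Polynomial.aeval_def, Polynomial.eval₂_eq_sum, Polynomial.sum, map_sum]
  refine Finset.sum_eq_zero fun e he => ?_
  have hen : n < e := by
    by_contra hc
    exact (Polynomial.mem_support_iff.mp he) (h e (le_of_not_gt hc))
  have : (algebraMap ℚ (PowerSeries ℚ)) (p.coeff e) * f ^ e
      = PowerSeries.C (p.coeff e) * f ^ e := rfl
  rw [this, coeff_C_mul, coeff_pow_eq_zero' hf hen, mul_zero]

/-- Substitution of the power series `f` (assumed to have zero constant coefficient)
into the power series `g`: the coefficient of `X^n` in `g ∘ f` only depends on the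
truncation of `g` at order `n + 1`. -/
noncomputable def substInto (f g : PowerSeries ℚ) : PowerSeries ℚ :=
  PowerSeries.mk fun n =>
    PowerSeries.coeff n (Polynomial.aeval f (PowerSeries.trunc (n + 1) g))

lemma substInto_stable {f : PowerSeries ℚ} (hf : constantCoeff f = 0)
    (g : PowerSeries ℚ) {n m : ℕ} (h : n < m) :
    coeff n (substInto f g) = coeff n (Polynomial.aeval f (trunc m g)) := by
  have key : coeff n (Polynomial.aeval f (trunc m g - trunc (n + 1) g)) = 0 := by
    refine coeff_aeval_eq_zero hf fun k hk => ?_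
    rw [Polynomial.coeff_sub, coeff_trunc, coeff_trunc,
      if_pos (lt_of_le_of_lt hk h), if_pos (Nat.lt_succ_of_le hk), sub_self]
  rw [map_sub, map_sub] at key
  have := sub_eq_zero.mp key
  rw [substInto, coeff_mk, this]

lemma substInto_one {f : PowerSeries ℚ} : substInto f 1 = 1 := by
  ext n
  rw [substInto, coeff_mk, trunc_one, map_one]

lemma substInto_add {f : PowerSeries ℚ} (g h : PowerSeries ℚ) :
    substInto f (g + h) = substInto f g + substInto f h := by
  ext n
  simp [substInto, coeff_mk, map_add]

lemma substInto_X {f : PowerSeries ℚ} (hf : constantCoeff f = 0) :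
    substInto f X = f := by
  ext n
  rw [substInto_stable hf X (show n < n + 2 by omega), trunc_X, Polynomial.aeval_X]

lemma substInto_mul {f : PowerSeries ℚ} (hf : constantCoeff f = 0)
    (g h : PowerSeries ℚ) :
    substInto f (g * h) = substInto f g * substInto f h := by
  ext n
  have key : coeff n (Polynomial.aeval f
      (trunc (n + 1) (g * h) - trunc (n + 1) g * trunc (n + 1) h)) = 0 := by
    refine coeff_aeval_eq_zero hf fun k hk => ?_
    rw [Polynomial.coeff_sub, sub_eq_zero]
    have h1 : (trunc (n+1) (g*h)).coeff k = coeff k (g * h) := by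
      rw [coeff_trunc, if_pos (Nat.lt_succ_of_le hk)]
    rw [h1, coeff_mul_eq_coeff_trunc_mul_trunc g h (Nat.lt_succ_of_le hk),
      ← Polynomial.coeff_coe, Polynomial.coe_mul]
  rw [map_sub, map_sub, sub_eq_zero] at key
  rw [substInto, coeff_mk, key, map_mul, coeff_mul, coeff_mul]
  refine Finset.sum_congr rfl fun p hp => ?_
  obtain ⟨hp1, hp2⟩ : p.1 ≤ n ∧ p.2 ≤ n := by
    have := Finset.HasAntidiagonal.mem_antidiagonal.mp hp
    omega
  rw [substInto_stable hf g (Nat.lt_succ_of_le hp1),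
    substInto_stable hf h (Nat.lt_succ_of_le hp2)]

/-- Let `P(0) = 1`, `P = 1 + 3XP²`, and `y := X·(P·(4−P)/3)²`; let `Q(0) = 1` with
`Q = 1 + T·Q³`. Then `y = ((P−1)/3)·((4−P)/3)²` and substituting `y` into `Q`
gives `3·(4 − P)⁻¹`. -/
theorem subst_quad_to_simple_quad
    (P Q : PowerSeries ℚ)
    (hP0 : constantCoeff P = 1) (hP : P = 1 + 3 * X * P ^ 2)
    (hQ0 : constantCoeff Q = 1) (hQ : Q = 1 + X * Q ^ 3) :
    letI y : PowerSeries ℚ := X * (P * (4 - P) * (3 : PowerSeries ℚ)⁻¹) ^ 2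
    y = ((P - 1) * (3 : PowerSeries ℚ)⁻¹) * ((4 - P) * (3 : PowerSeries ℚ)⁻¹) ^ 2 ∧
      substInto y Q = 3 * (4 - P)⁻¹ := by
  set t : PowerSeries ℚ := (3 : PowerSeries ℚ)⁻¹ with htdef
  have h3 : constantCoeff (3 : PowerSeries ℚ) ≠ 0 := by
    rw [map_ofNat]; norm_num
  have ht : (3 : PowerSeries ℚ) * t = 1 := PowerSeries.mul_inv_cancel _ h3
  have h4P : constantCoeff (4 - P) ≠ 0 := by
    rw [map_sub, hP0, map_ofNat]
    norm_num
  set u : PowerSeries ℚ := (4 - P)⁻¹ with hudef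
  have hu : (4 - P) * u = 1 := PowerSeries.mul_inv_cancel _ h4P
  set y : PowerSeries ℚ := X * (P * (4 - P) * t) ^ 2 with hydef
  have hy0 : constantCoeff y = 0 := by
    rw [hydef, map_mul, constantCoeff_X, zero_mul]
  constructor
  · rw [hydef]
    linear_combination (-(X*P^2*(4-P)^2*t^2)) * ht + (-(t^3*(4-P)^2)) * hP
  · set S : PowerSeries ℚ := substInto y Q with hSdef
    have hScube : substInto y (Q ^ 3) = S ^ 3 := by
      rw [pow_succ, pow_succ, pow_one, substInto_mul hy0, substInto_mul hy0, hSdef]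
      ring
    have hS : S = 1 + y * S ^ 3 := by
      conv_lhs => rw [hSdef, hQ]
      rw [substInto_add, substInto_one, substInto_mul hy0, substInto_X hy0, hScube]
    set R : PowerSeries ℚ := 3 * u with hRdef
    have hR : R = 1 + y * R ^ 3 := by
      have hPne : (4 - P) ≠ 0 := fun hc => h4P (by rw [hc, map_zero])
      apply mul_left_cancel₀ (pow_ne_zero 3 hPne)
      rw [hRdef, hydef]
      linear_combination (3*(4-P)^2 - (3-(4-P))*(4-P)^2*((4-P)^2*u^2+(4-P)*u+1)) * hu
        + ((4-P)^5*u^3) * hP + (-(X*P^2*(4-P)^5*u^3*(9*t+3))) * ht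
    have key : (S - R) * (1 - y * (S^2 + S*R + R^2)) = 0 := by
      linear_combination hS - hR
    rcases mul_eq_zero.mp key with h | h
    · exact sub_eq_zero.mp h
    · exfalso
      have := congrArg constantCoeff h
      rw [map_sub, map_one, map_mul, hy0, zero_mul, sub_zero, map_zero] at this
      exact one_ne_zero this
end

section
/- Let P ∈ ℚ⟦X⟧ be the formal power series with constant coefficient 1 satisfying P² = 1 + 8·X·P³, and let y := X·(P·(9 − P²)/8)³ ∈ ℚ⟦X⟧, a series with zero constant coefficient. Let Q ∈ ℚ⟦T⟧ be the formal power series with zero constant coefficient satisfying Q·(1 − Q)³ = T. Then the substitution of y into Q equals (P² − 1)/8 in ℚ⟦X⟧. -/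
open PowerSeries

namespace SubstIntoAux

variable {y : PowerSeries ℚ}

lemma coeff_pow_eq_zero (hy : constantCoeff y = 0) (n i : ℕ) (h : n < i) : coeff n (y ^ i) = 0 := by
  have hdvd : (X : PowerSeries ℚ) ^ i ∣ y ^ i :=
    pow_dvd_pow_of_dvd (PowerSeries.X_dvd_iff.mpr hy) i
  exact (PowerSeries.X_pow_dvd_iff.mp hdvd) n h

lemma key0 (hy : constantCoeff y = 0) (n : ℕ) (p : Polynomial ℚ) (hp : ∀ k ≤ n, p.coeff k = 0) :
    coeff n (Polynomial.aeval y p) = 0 := by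
  rw [Polynomial.aeval_eq_sum_range, map_sum]
  refine Finset.sum_eq_zero fun i _ => ?_
  rcases le_or_gt i n with hi | hi
  · rw [hp i hi, zero_smul, map_zero]
  · rw [coeff_smul, coeff_pow_eq_zero hy n i hi, smul_zero]

lemma key1 (hy : constantCoeff y = 0) (n : ℕ) (p q : Polynomial ℚ) (hpq : ∀ k ≤ n, p.coeff k = q.coeff k) :
    coeff n (Polynomial.aeval y p) = coeff n (Polynomial.aeval y q) := by
  have h0 : coeff n (Polynomial.aeval y (p - q)) = 0 :=
    key0 hy n (p - q) (fun k hk => by simp [hpq k hk])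
  rw [map_sub, map_sub, sub_eq_zero] at h0
  exact h0

lemma stab (hy : constantCoeff y = 0) (n N : ℕ) (h : n < N) (g : PowerSeries ℚ) :
    coeff n (Polynomial.aeval y (trunc N g)) = coeff n (substInto y g) := by
  rw [substInto, coeff_mk]
  refine key1 hy n _ _ fun k hk => ?_
  rw [coeff_trunc, coeff_trunc, if_pos (lt_of_le_of_lt hk h),
    if_pos (Nat.lt_succ_of_le hk)]

lemma map_one' : substInto y (1 : PowerSeries ℚ) = 1 := by
  ext n
  rw [substInto, coeff_mk, trunc_one, map_one]

lemma map_add' (f g : PowerSeries ℚ) :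
    substInto y (f + g) = substInto y f + substInto y g := by
  ext n
  rw [map_add, substInto, substInto, substInto, coeff_mk, coeff_mk, coeff_mk,
    map_add, map_add, map_add]

lemma map_mul' (hy : constantCoeff y = 0) (f g : PowerSeries ℚ) :
    substInto y (f * g) = substInto y f * substInto y g := by
  ext n
  rw [substInto, coeff_mk]
  have h1 : coeff n (Polynomial.aeval y (trunc (n + 1) (f * g)))
      = coeff n (Polynomial.aeval y (trunc (n + 1) f * trunc (n + 1) g)) := by
    refine key1 hy n _ _ fun k hk => ?_
    rw [coeff_trunc, if_pos (Nat.lt_succ_of_le hk), ← Polynomial.coeff_coe,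
      Polynomial.coe_mul, ← PowerSeries.coeff_mul_eq_coeff_trunc_mul_trunc f g (Nat.lt_succ_of_le hk)]
  rw [h1, map_mul, PowerSeries.coeff_mul, PowerSeries.coeff_mul]
  refine Finset.sum_congr rfl fun ij hij => ?_
  rw [Finset.HasAntidiagonal.mem_antidiagonal] at hij
  have h1 : ij.1 < n + 1 := Nat.lt_succ_of_le (hij ▸ Nat.le_add_right _ _)
  have h2 : ij.2 < n + 1 := Nat.lt_succ_of_le (hij ▸ Nat.le_add_left _ _)
  rw [stab hy ij.1 (n + 1) h1 f, stab hy ij.2 (n + 1) h2 g]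

/-- `substInto y` as a ring homomorphism. -/
noncomputable def hom (hy : constantCoeff y = 0) : PowerSeries ℚ →+* PowerSeries ℚ where
  toFun := substInto y
  map_one' := map_one' (y := y)
  map_mul' := map_mul' hy
  map_zero' := by
    have : substInto y 0 = 0 := by
      ext n
      rw [substInto, coeff_mk, map_zero]
      simp
    exact this
  map_add' := map_add' (y := y)

lemma hom_X (hy : constantCoeff y = 0) : hom hy X = y := by
  ext n
  show coeff n (substInto y X) = coeff n y
  rw [substInto, coeff_mk]
  cases n with
  | zero =>
    have h : trunc 1 (X : PowerSeries ℚ) = 0 := by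
      ext k
      rw [coeff_trunc]
      split_ifs with h
      · interval_cases k; simp
      · simp
    rw [h, map_zero, map_zero, coeff_zero_eq_constantCoeff, hy]
  | succ m =>
    rw [trunc_X_of (by omega), Polynomial.aeval_X]

lemma hom_const0 (hy : constantCoeff y = 0) (g : PowerSeries ℚ)
    (hg : constantCoeff g = 0) : constantCoeff (hom hy g) = 0 := by
  have h : trunc 1 g = 0 := by
    ext k
    rw [coeff_trunc]
    split_ifs with h
    · interval_cases k; simpa using hg
    · simp
  show constantCoeff (substInto y g) = 0
  rw [← coeff_zero_eq_constantCoeff, substInto, coeff_mk, h, map_zero, map_zero]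

end SubstIntoAux

/-- Let `P(0) = 1` with `P² = 1 + 8XP³`, and `y := X·(P·(9−P²)/8)³`; let `Q(0) = 0`
with `Q·(1−Q)³ = T`. Then substituting `y` into `Q` gives `(P² − 1)/8`. -/
theorem subst_triang_to_simple_triang
    (P Q : PowerSeries ℚ)
    (hP0 : constantCoeff P = 1) (hP : P ^ 2 = 1 + 8 * X * P ^ 3)
    (hQ0 : constantCoeff Q = 0) (hQ : Q * (1 - Q) ^ 3 = X) :
    substInto (X * (P * (9 - P ^ 2) * (8 : PowerSeries ℚ)⁻¹) ^ 3) Q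
      = (P ^ 2 - 1) * (8 : PowerSeries ℚ)⁻¹ := by
  set e : PowerSeries ℚ := (8 : PowerSeries ℚ)⁻¹ with he_def
  have he : (8 : PowerSeries ℚ) * e = 1 := by
    refine PowerSeries.mul_inv_cancel _ ?_
    rw [map_ofNat]
    norm_num
  set y : PowerSeries ℚ := X * (P * (9 - P ^ 2) * e) ^ 3 with hy_def
  have hy : constantCoeff y = 0 := by
    rw [hy_def, map_mul, constantCoeff_X, zero_mul]
  set S := SubstIntoAux.hom hy with hS
  have hSX : S X = y := SubstIntoAux.hom_X hy
  set A := S Q with hA_def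
  have hA0 : constantCoeff A = 0 := SubstIntoAux.hom_const0 hy Q hQ0
  have hA : A * (1 - A) ^ 3 = y := by
    have := congrArg S hQ
    rwa [map_mul, map_pow, map_sub, map_one, hSX] at this
  set R : PowerSeries ℚ := (P ^ 2 - 1) * e with hR_def
  have hR0 : constantCoeff R = 0 := by
    rw [hR_def, map_mul]
    have : constantCoeff (P ^ 2 - 1) = 0 := by
      rw [map_sub, map_pow, hP0, map_one]; ring
    rw [this, zero_mul]
  have hP' : P ^ 2 - 1 = 8 * X * P ^ 3 := by linear_combination hP
  have h1R : (1 : PowerSeries ℚ) - R = (9 - P ^ 2) * e := by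
    rw [hR_def]
    linear_combination -he
  have hRy : R * (1 - R) ^ 3 = y := by
    calc R * (1 - R) ^ 3 = (P ^ 2 - 1) * e * ((9 - P ^ 2) * e) ^ 3 := by
          rw [h1R, hR_def]
      _ = 8 * X * P ^ 3 * e * ((9 - P ^ 2) * e) ^ 3 := by rw [hP']
      _ = y := by
          rw [hy_def]
          linear_combination (X * P ^ 3 * (9 - P ^ 2) ^ 3 * e ^ 3) * he
  set G : PowerSeries ℚ := 1 - 3 * (A + R) + 3 * (A ^ 2 + A * R + R ^ 2)
      - (A ^ 3 + A ^ 2 * R + A * R ^ 2 + R ^ 3) with hG_def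
  have h1 : (A - R) * G = 0 := by
    rw [hG_def]
    linear_combination hA - hRy
  have hGne : G ≠ 0 := by
    intro h
    have : constantCoeff G = 0 := by rw [h, map_zero]
    rw [hG_def] at this
    simp only [map_sub, map_add, map_mul, map_pow, map_one, hA0, hR0] at this
    norm_num at this
  have hAR : A = R := by
    rcases mul_eq_zero.mp h1 with h | h
    · exact sub_eq_zero.mp h
    · exact absurd h hGne
  exact hAR
end
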